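/- arXiv:1704.04729 — 7 statements merged into one kernel-verified Lean document; each statement's English description precedes it below -/
import Mathlib

section
/- Let (A, m, v) be a C*-Frobenius algebra in Hilb_f and let φ = v* : A → ℂ be the adjoint of the unit map v. Then there exists a unique conjugate-linear map A → A, x ↦ x*, such that ⟨x, y⟩ = φ(y* x) for all x, y ∈ A. This map is an involution making A a *-algebra (i.e. (x*)* = x and (x y)* = y* x*), it satisfies ⟨a x, y⟩ = ⟨x, a* y⟩ for all a, x, y ∈ A (left multiplication is a *-representation of A on the Hilbert space A), and with this involution and the norm given by the operator norm of left multiplication, A is a C*-algebra. -/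
/-!
STATEMENT 1.  Let (A, m, v) be a C*-Frobenius algebra in Hilb_f and φ = v* the adjoint of the
unit.  Then there is a unique conjugate-linear map x ↦ x* on A with ⟨x,y⟩ = φ(y* x)
(in Mathlib's convention, conjugate-linear in the first slot: ⟪x, y⟫ = φ(x* y)); it is an
involution making A a *-algebra, left multiplication is a *-representation of A on the Hilbert
space A, and with this involution and the norm given by the operator norm of left
multiplication, A is a C*-algebra (injectivity of the left regular representation and the
C*-identity for that norm).

Conventions.  The multiplication is a bilinear map `m : A →ₗ[ℂ] A →ₗ[ℂ] A` with unit `e = v(1)`.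
The adjoint m* : A → A ⊗ A is encoded as a map `mstar` satisfying the pairing identity
⟪a ⊗ b, m* y⟫ = ⟪m(a ⊗ b), y⟫, where ⟪a ⊗ b, ·⟫ is implemented by `tensPair a b`.
The Frobenius condition (m ⊗ id)(id ⊗ m*) = m* m = (id ⊗ m)(m* ⊗ id) is expressed
elementwise on pure tensors a ⊗ b.  φ = v* is the functional y ↦ ⟪e, y⟫.
-/

open scoped TensorProduct

/-- The linear functional `⟪a ⊗ b, ·⟫` on `E ⊗[ℂ] F` induced by the inner products. -/
noncomputable def tensPair {E F : Type*} [NormedAddCommGroup E] [InnerProductSpace ℂ E]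
    [NormedAddCommGroup F] [InnerProductSpace ℂ F] (a : E) (b : F) :
    TensorProduct ℂ E F →ₗ[ℂ] ℂ :=
  TensorProduct.lift ((LinearMap.mul ℂ ℂ).compl₁₂ (innerₛₗ ℂ a) (innerₛₗ ℂ b))

theorem statement1 {A : Type*} [NormedAddCommGroup A] [InnerProductSpace ℂ A]
    [FiniteDimensional ℂ A]
    (m : A →ₗ[ℂ] A →ₗ[ℂ] A) (e : A)
    (hassoc : ∀ a b c : A, m (m a b) c = m a (m b c))
    (hul : ∀ a : A, m e a = a) (hur : ∀ a : A, m a e = a)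
    (mstar : A → TensorProduct ℂ A A)
    (hadj : ∀ a b y : A, tensPair a b (mstar y) = (inner ℂ (m a b) y : ℂ))
    (hfrob₁ : ∀ a b : A,
      TensorProduct.map (m a) LinearMap.id (mstar b) = mstar (m a b))
    (hfrob₂ : ∀ a b : A,
      TensorProduct.map LinearMap.id (m.flip b) (mstar a) = mstar (m a b)) :
    -- existence and uniqueness of the conjugate-linear involution:
    (∃! s : A → A,
      (∀ x y : A, s (x + y) = s x + s y) ∧
      (∀ (c : ℂ) (x : A), s (c • x) = starRingEnd ℂ c • s x) ∧
      (∀ x y : A, (inner ℂ x y : ℂ) = (inner ℂ e (m (s x) y) : ℂ))) ∧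
    -- and any such map has the stated properties:
    (∀ s : A → A,
      ((∀ x y : A, s (x + y) = s x + s y) ∧
       (∀ (c : ℂ) (x : A), s (c • x) = starRingEnd ℂ c • s x) ∧
       (∀ x y : A, (inner ℂ x y : ℂ) = (inner ℂ e (m (s x) y) : ℂ))) →
      -- s is an involution:
      (∀ x : A, s (s x) = x) ∧
      -- s is anti-multiplicative:
      (∀ x y : A, s (m x y) = m (s y) (s x)) ∧
      -- left multiplication is a *-representation of A on the Hilbert space A:
      (∀ a x y : A, (inner ℂ (m a x) y : ℂ) = (inner ℂ x (m (s a) y) : ℂ)) ∧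
      -- the operator norm of left multiplication is a genuine norm (injectivity) …
      (∀ x : A, LinearMap.toContinuousLinearMap (m x) = 0 → x = 0) ∧
      -- … satisfying the C*-identity ‖x* x‖ = ‖x‖², so A is a C*-algebra for it:
      (∀ x : A, ‖LinearMap.toContinuousLinearMap (m (m (s x) x))‖ =
        ‖LinearMap.toContinuousLinearMap (m x)‖ ^ 2)) := by
  classical
  set G : A → A := fun a =>
    (InnerProductSpace.toDual ℂ A).symm
      ((innerSL ℂ e).comp (LinearMap.toContinuousLinearMap (m a))) with hGdef
  have hG : ∀ a y : A, (inner ℂ (G a) y : ℂ) = inner ℂ e (m a y) := by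
    intro a y
    simp [hGdef, InnerProductSpace.toDual_symm_apply]
  have hR : ∀ a x y : A, (inner ℂ (m a x) y : ℂ) = inner ℂ x (m (G a) y) := by
    intro a x y
    have hms : mstar y = TensorProduct.map LinearMap.id (m.flip y) (mstar e) := by
      rw [hfrob₂ e y, hul]
    set Ry := LinearMap.toContinuousLinearMap (m.flip y) with hRy
    have hex : ∀ t : TensorProduct ℂ A A,
        tensPair a x (TensorProduct.map LinearMap.id (m.flip y) t)
          = tensPair a ((ContinuousLinearMap.adjoint Ry) x) t := by
      intro t
      induction t using TensorProduct.induction_on with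
      | zero => simp
      | tmul u v =>
          simp only [TensorProduct.map_tmul, tensPair, TensorProduct.lift.tmul,
            LinearMap.compl₁₂_apply, innerₛₗ_apply_apply, LinearMap.mul_apply',
            LinearMap.id_coe, id_eq]
          rw [ContinuousLinearMap.adjoint_inner_left]
          simp [hRy]
      | add u v hu hv => simp only [map_add, hu, hv]
    calc (inner ℂ (m a x) y : ℂ) = tensPair a x (mstar y) := (hadj a x y).symm
      _ = tensPair a ((ContinuousLinearMap.adjoint Ry) x) (mstar e) := by
            rw [hms]; exact hex _
      _ = inner ℂ (m a ((ContinuousLinearMap.adjoint Ry) x)) e := hadj _ _ e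
      _ = (starRingEnd ℂ) (inner ℂ e (m a ((ContinuousLinearMap.adjoint Ry) x))) :=
            (inner_conj_symm _ _).symm
      _ = (starRingEnd ℂ) (inner ℂ (G a) ((ContinuousLinearMap.adjoint Ry) x)) := by
            rw [hG]
      _ = inner ℂ ((ContinuousLinearMap.adjoint Ry) x) (G a) := inner_conj_symm _ _
      _ = inner ℂ x (Ry (G a)) := ContinuousLinearMap.adjoint_inner_left Ry _ _
      _ = inner ℂ x (m (G a) y) := by simp [hRy]
  have hGG : ∀ a, G (G a) = a := by
    intro a
    refine ext_inner_right ℂ fun y => ?_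
    rw [hG, ← hR a e y, hur]
  have hGadd : ∀ x y, G (x + y) = G x + G y := by
    intro x y
    refine ext_inner_right ℂ fun z => ?_
    simp [hG, inner_add_left, map_add, LinearMap.add_apply, inner_add_right]
  have hGsmul : ∀ (c : ℂ) x, G (c • x) = starRingEnd ℂ c • G x := by
    intro c x
    refine ext_inner_right ℂ fun z => ?_
    simp [hG, inner_smul_left, inner_smul_right, map_smul, LinearMap.smul_apply]
  have hGprop : ∀ x y : A, (inner ℂ x y : ℂ) = inner ℂ e (m (G x) y) := by
    intro x y
    have h := hG (G x) y
    rwa [hGG] at h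
  have huniq : ∀ s : A → A,
      (∀ x y : A, (inner ℂ x y : ℂ) = inner ℂ e (m (s x) y)) → ∀ x, s x = G x := by
    intro s hs x
    have h1 : G (s x) = x := by
      refine ext_inner_right ℂ fun y => ?_
      rw [hG]; exact (hs x y).symm
    calc s x = G (G (s x)) := (hGG _).symm
      _ = G x := by rw [h1]
  constructor
  · refine ⟨G, ⟨hGadd, hGsmul, hGprop⟩, ?_⟩
    intro s hs
    funext x
    exact huniq s hs.2.2 x
  · rintro s ⟨hs1, hs2, hs3⟩
    have hsG : ∀ x, s x = G x := huniq s hs3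
    refine ⟨?_, ?_, ?_, ?_, ?_⟩
    · intro x; rw [hsG, hsG, hGG]
    · intro x y
      simp only [hsG]
      refine ext_inner_right ℂ fun z => ?_
      rw [hG, hassoc, ← hG, hR (G y) (G x) z, hGG]
    · intro a x y; rw [hsG]; exact hR a x y
    · intro x hx
      have h0 : m x e = 0 := by
        have h := congrArg (fun T : A →L[ℂ] A => T e) hx
        simpa using h
      rwa [hur] at h0
    · intro x
      rw [hsG]
      have hadjS : LinearMap.toContinuousLinearMap (m (G x)) =
          ContinuousLinearMap.adjoint (LinearMap.toContinuousLinearMap (m x)) := by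
        rw [ContinuousLinearMap.eq_adjoint_iff]
        intro u v
        simpa using (hR (G x) u v).trans (by rw [hGG])
      have hcomp : LinearMap.toContinuousLinearMap (m (m (G x) x)) =
          (LinearMap.toContinuousLinearMap (m (G x))).comp
            (LinearMap.toContinuousLinearMap (m x)) := by
        ext y
        simp [hassoc]
      rw [hcomp, hadjS, ContinuousLinearMap.norm_adjoint_comp_self, sq]
end

section
/- Let (A, m, v) be a C*-Frobenius algebra in Hilb_f, equipped with the unique involution x ↦ x* satisfying ⟨x, y⟩ = v*(y* x), and let (X, m_X) be a left A-module in Hilb_f. Then the unitarity condition (m ⊗ id_X)(id_A ⊗ m_X*) = m_X* m_X holds if and only if the representation of A on X is *-preserving, i.e. ⟨a x, y⟩ = ⟨x, a* y⟩ for all a ∈ A and x, y ∈ X. -/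
/-!
STATEMENT 2.  Let (A, m, v) be a C*-Frobenius algebra in Hilb_f, equipped with the unique
involution x ↦ x* = s x satisfying ⟨x,y⟩ = v*(y* x) (Mathlib convention: ⟪x, y⟫ = φ(x* y) with
φ = v* = ⟪e, ·⟫), and let (X, m_X) be a left A-module in Hilb_f.  Then the unitarity condition
(m ⊗ id_X)(id_A ⊗ m_X*) = m_X* m_X holds if and only if the representation of A on X is
*-preserving: ⟪a x, y⟫ = ⟪x, a* y⟫ for all a ∈ A, x, y ∈ X.

The adjoints m* and m_X* are encoded via the pairing functionals `tensPair a b = ⟪a ⊗ b, ·⟫`.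
The unitarity condition is expressed elementwise on pure tensors a ⊗ x: applying
(id_A ⊗ m_X*) to a ⊗ x gives a ⊗ m_X*(x), and (m ⊗ id_X) then acts as
TensorProduct.map (m a) id; the right-hand side is m_X*(m_X a x).
-/

open scoped TensorProduct

section Aux

variable {E F G : Type*} [NormedAddCommGroup E] [InnerProductSpace ℂ E]
  [NormedAddCommGroup F] [InnerProductSpace ℂ F]
  [NormedAddCommGroup G] [InnerProductSpace ℂ G]

lemma tensPair_tmul (a u : E) (b w : F) :
    tensPair a b (u ⊗ₜ[ℂ] w) = (inner ℂ a u : ℂ) * (inner ℂ b w : ℂ) := rfl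

lemma tensPair_map [FiniteDimensional ℂ E] [FiniteDimensional ℂ G]
    (f : G →ₗ[ℂ] E) (a : E) (b : F) (t : TensorProduct ℂ G F) :
    tensPair a b (TensorProduct.map f LinearMap.id t)
      = tensPair (LinearMap.adjoint f a) b t := by
  induction t using TensorProduct.induction_on with
  | zero => simp
  | tmul u w =>
      simp only [TensorProduct.map_tmul, LinearMap.id_coe, id_eq, tensPair_tmul,
        LinearMap.adjoint_inner_left]
  | add x y hx hy => simp only [map_add, hx, hy]

lemma tensPair_basis [FiniteDimensional ℂ E] [FiniteDimensional ℂ F]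
    (B : OrthonormalBasis (Fin (Module.finrank ℂ E)) ℂ E)
    (C : OrthonormalBasis (Fin (Module.finrank ℂ F)) ℂ F)
    (i : Fin (Module.finrank ℂ E)) (j : Fin (Module.finrank ℂ F))
    (t : TensorProduct ℂ E F) :
    tensPair (B i) (C j) t = (B.toBasis.tensorProduct C.toBasis).repr t (i, j) := by
  induction t using TensorProduct.induction_on with
  | zero => simp
  | tmul u w =>
      rw [tensPair_tmul, Module.Basis.tensorProduct_repr_tmul_apply,
        B.coe_toBasis_repr_apply, C.coe_toBasis_repr_apply,
        B.repr_apply_apply, C.repr_apply_apply, mul_comm, smul_eq_mul]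
  | add x y hx hy => simp only [map_add, hx, hy, Finsupp.add_apply]

lemma tensPair_inj [FiniteDimensional ℂ E] [FiniteDimensional ℂ F]
    {t : TensorProduct ℂ E F} (h : ∀ (a : E) (b : F), tensPair a b t = 0) : t = 0 := by
  let B := stdOrthonormalBasis ℂ E
  let C := stdOrthonormalBasis ℂ F
  have hr : (B.toBasis.tensorProduct C.toBasis).repr t = 0 := by
    ext ij
    have := tensPair_basis B C ij.1 ij.2 t
    rw [h] at this
    simpa using this.symm
  have := (B.toBasis.tensorProduct C.toBasis).repr.map_eq_zero_iff.mp hr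
  exact this

end Aux

theorem statement2 {A X : Type*} [NormedAddCommGroup A] [InnerProductSpace ℂ A]
    [FiniteDimensional ℂ A] [NormedAddCommGroup X] [InnerProductSpace ℂ X]
    [FiniteDimensional ℂ X]
    -- the C*-Frobenius algebra (A, m, v) with e = v(1):
    (m : A →ₗ[ℂ] A →ₗ[ℂ] A) (e : A)
    (hassoc : ∀ a b c : A, m (m a b) c = m a (m b c))
    (hul : ∀ a : A, m e a = a) (hur : ∀ a : A, m a e = a)
    (mstar : A → TensorProduct ℂ A A)
    (hadj : ∀ a b y : A, tensPair a b (mstar y) = (inner ℂ (m a b) y : ℂ))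
    (hfrob₁ : ∀ a b : A,
      TensorProduct.map (m a) LinearMap.id (mstar b) = mstar (m a b))
    (hfrob₂ : ∀ a b : A,
      TensorProduct.map LinearMap.id (m.flip b) (mstar a) = mstar (m a b))
    -- the involution determined by ⟪x, y⟫ = φ(x* y), φ = v* = ⟪e, ·⟫:
    (s : A → A)
    (hs_add : ∀ x y : A, s (x + y) = s x + s y)
    (hs_smul : ∀ (c : ℂ) (x : A), s (c • x) = starRingEnd ℂ c • s x)
    (hs : ∀ x y : A, (inner ℂ x y : ℂ) = (inner ℂ e (m (s x) y) : ℂ))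
    -- the left A-module (X, m_X) in Hilb_f and the adjoint m_X*:
    (mX : A →ₗ[ℂ] X →ₗ[ℂ] X)
    (hmod : ∀ (a b : A) (x : X), mX (m a b) x = mX a (mX b x))
    (hmodu : ∀ x : X, mX e x = x)
    (mXstar : X → TensorProduct ℂ A X)
    (hadjX : ∀ (a : A) (x y : X), tensPair a x (mXstar y) = (inner ℂ (mX a x) y : ℂ)) :
    -- unitarity ⇔ the representation is *-preserving:
    (∀ (a : A) (x : X),
        TensorProduct.map (m a) LinearMap.id (mXstar x) = mXstar (mX a x)) ↔
      (∀ (a : A) (x y : X), (inner ℂ (mX a x) y : ℂ) = (inner ℂ x (mX (s a) y) : ℂ)) := by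
  classical
  -- Step 1: the adjoint of left multiplication by `a` is a right-module map.
  have E1 : ∀ a x y : A, m (LinearMap.adjoint (m a) x) y
      = LinearMap.adjoint (m a) (m x y) := by
    intro a x y
    apply ext_inner_right ℂ
    intro b
    have h1 : (inner ℂ (m (LinearMap.adjoint (m a) x) y) b : ℂ)
        = tensPair (LinearMap.adjoint (m a) x) y (mstar b) := (hadj _ _ _).symm
    rw [h1, ← tensPair_map, hfrob₁, hadj, ← LinearMap.adjoint_inner_left]
  -- Step 2: the adjoint of left multiplication is left multiplication by `a† := adjoint (m a) e`.
  have E2 : ∀ a y : A, LinearMap.adjoint (m a) y = m (LinearMap.adjoint (m a) e) y := by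
    intro a y
    have := E1 a e y
    rw [hul] at this
    exact this.symm
  -- Step 3: `s a = adjoint (m a) e`.
  have hsa : ∀ a : A, s a = LinearMap.adjoint (m a) e := by
    intro a
    set d : A := s a - LinearMap.adjoint (m a) e with hd
    have hz : ∀ y : A, (inner ℂ e (m d y) : ℂ) = 0 := by
      intro y
      have h1 : (inner ℂ e (m (s a) y) : ℂ) = (inner ℂ a y : ℂ) := (hs a y).symm
      have h2 : (inner ℂ e (m (LinearMap.adjoint (m a) e) y) : ℂ) = (inner ℂ a y : ℂ) := by
        rw [← E2, LinearMap.adjoint_inner_right, hur]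
      have : m d y = m (s a) y - m (LinearMap.adjoint (m a) e) y := by
        rw [hd, map_sub, LinearMap.sub_apply]
      rw [this, inner_sub_right, h1, h2, sub_self]
    have h1 : LinearMap.adjoint (m d) e = 0 := by
      apply ext_inner_right ℂ
      intro y
      rw [LinearMap.adjoint_inner_left, inner_zero_left]
      exact hz y
    have h2 : LinearMap.adjoint (m d) = 0 := by
      ext y
      rw [E2 d y, h1, map_zero, LinearMap.zero_apply]
    have h3 : m d = 0 := by
      have := congrArg (fun f => LinearMap.adjoint f) h2
      simpa [LinearMap.adjoint_adjoint] using this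
    have h4 : d = 0 := by
      have := hur d
      rw [h3] at this
      simpa using this.symm
    have := sub_eq_zero.mp h4
    exact this
  constructor
  · -- unitarity → *-preserving
    intro hU a x y
    have h := congrArg (tensPair e y) (hU a x)
    rw [tensPair_map, ← hsa, hadjX, hadjX, hmodu] at h
    -- h : ⟪mX (s a) y, x⟫ = ⟪y, mX a x⟫
    calc (inner ℂ (mX a x) y : ℂ) = starRingEnd ℂ (inner ℂ y (mX a x) : ℂ) :=
          (inner_conj_symm _ _).symm
      _ = starRingEnd ℂ (inner ℂ (mX (s a) y) x : ℂ) := by rw [h]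
      _ = (inner ℂ x (mX (s a) y) : ℂ) := inner_conj_symm _ _
  · -- *-preserving → unitarity
    intro hS a x
    have key : ∀ (b : A) (z : X),
        tensPair b z (TensorProduct.map (m a) LinearMap.id (mXstar x))
          = tensPair b z (mXstar (mX a x)) := by
      intro b z
      rw [tensPair_map, hadjX, hadjX]
      have h1 : LinearMap.adjoint (m a) b = m (s a) b := by rw [E2, ← hsa]
      rw [h1, hmod]
      -- goal: ⟪mX (s a) (mX b z), x⟫ = ⟪mX b z, mX a x⟫
      calc (inner ℂ (mX (s a) (mX b z)) x : ℂ)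
          = starRingEnd ℂ (inner ℂ x (mX (s a) (mX b z)) : ℂ) := (inner_conj_symm _ _).symm
        _ = starRingEnd ℂ (inner ℂ (mX a x) (mX b z) : ℂ) := by rw [← hS a x (mX b z)]
        _ = (inner ℂ (mX b z) (mX a x) : ℂ) := inner_conj_symm _ _
    have : TensorProduct.map (m a) LinearMap.id (mXstar x) - mXstar (mX a x) = 0 := by
      apply tensPair_inj
      intro b z
      rw [map_sub, key, sub_self]
    exact sub_eq_zero.mp this
end

section
/- Let (A, φ_A) and (B, φ_B) be Frobenius C*-algebras and let T : A → B be an algebra isomorphism (a bijective ℂ-linear map with T(x y) = T(x) T(y) for all x, y). Let T* : B → A be the adjoint of T with respect to the inner products induced by φ_A and φ_B. Then T is *-preserving (T(x*) = T(x)* for all x ∈ A) if and only if T* T : A → A is a left A-module map, i.e. T* T(a b) = a · T* T(b) for all a, b ∈ A. -/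
/-!
STATEMENT 4.  Let (A, φ_A) and (B, φ_B) be Frobenius C*-algebras (finite-dimensional
C*-algebras with faithful positive functionals) and T : A → B an algebra isomorphism.
Let T* : B → A be the adjoint of T with respect to the inner products induced by φ_A and φ_B
(Mathlib convention, conjugate-linear in the first slot: ⟪x, y⟫_A = φ_A(x* y), so adjointness
reads  ⟪T x, y⟫_B = ⟪x, T* y⟫_A, i.e. φ_B((T x)* y) = φ_A(x* (T* y))).
Then T is *-preserving iff T* T is a left A-module map.
-/

open scoped ComplexOrder

theorem statement4 {A B : Type*}
    [NormedRing A] [StarRing A] [CStarRing A] [NormedAlgebra ℂ A] [StarModule ℂ A]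
    [FiniteDimensional ℂ A]
    [NormedRing B] [StarRing B] [CStarRing B] [NormedAlgebra ℂ B] [StarModule ℂ B]
    [FiniteDimensional ℂ B]
    (φA : A →ₗ[ℂ] ℂ) (φB : B →ₗ[ℂ] ℂ)
    (hposA : ∀ a : A, 0 ≤ φA (star a * a)) (hfaithA : ∀ a : A, φA (star a * a) = 0 → a = 0)
    (hposB : ∀ b : B, 0 ≤ φB (star b * b)) (hfaithB : ∀ b : B, φB (star b * b) = 0 → b = 0)
    (T : A →ₗ[ℂ] B) (hTbij : Function.Bijective T)
    (hTmul : ∀ x y : A, T (x * y) = T x * T y)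
    (Ts : B → A)
    (hTadj : ∀ (x : A) (y : B), φB (star (T x) * y) = φA (star x * Ts y)) :
    (∀ x : A, T (star x) = star (T x)) ↔
      (∀ a b : A, Ts (T (a * b)) = a * Ts (T b)) := by

  have hT1 : T 1 = 1 := by
    obtain ⟨y, hy⟩ := hTbij.2 (1 : B)
    calc T 1 = T 1 * T y := by rw [hy, mul_one]
      _ = T (1 * y) := (hTmul 1 y).symm
      _ = 1 := by rw [one_mul, hy]
  have hextA : ∀ u v : A, (∀ x : A, φA (star x * u) = φA (star x * v)) → u = v := by
    intro u v h
    have h0 : φA (star (u - v) * (u - v)) = 0 := by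
      rw [mul_sub, map_sub, h (u - v), sub_self]
    exact sub_eq_zero.mp (hfaithA _ h0)
  have hextB : ∀ u v : B, (∀ w : B, φB (star w * u) = φB (star w * v)) → u = v := by
    intro u v h
    have h0 : φB (star (u - v) * (u - v)) = 0 := by
      rw [mul_sub, map_sub, h (u - v), sub_self]
    exact sub_eq_zero.mp (hfaithB _ h0)
  constructor
  · intro hstar a b
    apply hextA
    intro x
    have key : star (T x) * T a = star (T (star a * x)) := by
      rw [hTmul, hstar, star_mul, star_star]
    calc φA (star x * Ts (T (a * b)))
        = φB (star (T x) * T (a * b)) := (hTadj x _).symm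
      _ = φB (star (T x) * (T a * T b)) := by rw [hTmul]
      _ = φB ((star (T x) * T a) * T b) := by rw [mul_assoc]
      _ = φB (star (T (star a * x)) * T b) := by rw [key]
      _ = φA (star (star a * x) * Ts (T b)) := hTadj _ _
      _ = φA (star x * (a * Ts (T b))) := by rw [star_mul, star_star, mul_assoc]
  · intro hmod x
    apply hextB
    intro w
    obtain ⟨y, rfl⟩ := hTbij.2 w
    have h1 : Ts (T (star x)) = star x * Ts (T 1) := by
      have := hmod (star x) 1
      rwa [mul_one] at this
    calc φB (star (T y) * T (star x))
        = φA (star y * Ts (T (star x))) := hTadj _ _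
      _ = φA (star y * (star x * Ts (T 1))) := by rw [h1]
      _ = φA (star (x * y) * Ts (T 1)) := by rw [star_mul, mul_assoc]
      _ = φB (star (T (x * y)) * T 1) := (hTadj _ _).symm
      _ = φB (star (T y) * star (T x)) := by rw [hT1, mul_one, hTmul, star_mul]
end

section
/- With A, B, C, ψ_B, ψ_C, the bases (x_i), (y_j) and dual bases (x^i), (y^j), and the nonzero scalar λ as in the context, the following are equivalent: (1) ∑_{i,j} x^i y^j x_i ⊗ y_j = λ (1 ⊗ 1) in the algebraic tensor product A ⊗_ℂ A; (2) ∑_i x^i y x_i = λ ψ_C(y) · 1 in A for every y ∈ C. -/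
/-!
STATEMENT 10.  A is a unital ℂ-algebra, B and C finite-dimensional unital subalgebras,
ψ_B and ψ_C linear functionals on B and C with nondegenerate multiplication pairings,
(xᵢ), (yⱼ) bases of B and C, (xⁱ), (yʲ) the dual bases (ψ_B(xᵢ xʲ) = δᵢⱼ, ψ_C(yⱼ yᵏ) = δⱼₖ),
and λ ≠ 0.  Then the following are equivalent:
(1) ∑_{i,j} xⁱ yʲ xᵢ ⊗ yⱼ = λ (1 ⊗ 1) in A ⊗_ℂ A;
(2) ∑_i xⁱ y xᵢ = λ ψ_C(y) · 1 in A for every y ∈ C.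
-/

open scoped TensorProduct

theorem statement10 {A : Type*} [Ring A] [Algebra ℂ A]
    (B C : Subalgebra ℂ A) {m n : ℕ}
    (x : Module.Basis (Fin m) ℂ B) (xd : Fin m → B)
    (y : Module.Basis (Fin n) ℂ C) (yd : Fin n → C)
    (ψB : B →ₗ[ℂ] ℂ) (ψC : C →ₗ[ℂ] ℂ)
    -- nondegeneracy of the pairings:
    (hndB₁ : ∀ b : B, (∀ b' : B, ψB (b * b') = 0) → b = 0)
    (hndB₂ : ∀ b : B, (∀ b' : B, ψB (b' * b) = 0) → b = 0)
    (hndC₁ : ∀ c : C, (∀ c' : C, ψC (c * c') = 0) → c = 0)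
    (hndC₂ : ∀ c : C, (∀ c' : C, ψC (c' * c) = 0) → c = 0)
    -- dual-basis relations:
    (hdualB : ∀ i j, ψB (x i * xd j) = if i = j then 1 else 0)
    (hdualC : ∀ j k, ψC (y j * yd k) = if j = k then 1 else 0)
    (lam : ℂ) (hlam : lam ≠ 0) :
    (∑ i, ∑ j, ((xd i : A) * (yd j : A) * (x i : A)) ⊗ₜ[ℂ] (y j : A) =
        lam • ((1 : A) ⊗ₜ[ℂ] (1 : A))) ↔
      (∀ z : C, ∑ i, (xd i : A) * (z : A) * (x i : A) = (lam * ψC z) • (1 : A)) := by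

  classical
  -- extend ψC to a linear functional on A
  obtain ⟨g, hg⟩ := LinearMap.exists_extend (p := Subalgebra.toSubmodule C) ψC
  have hgC : ∀ c : C, g (c : A) = ψC c := fun c => LinearMap.congr_fun hg c
  -- injectivity of the pairing against the basis y
  have einj : ∀ z : C, (∀ j, ψC (y j * z) = 0) → z = 0 := by
    intro z hz
    refine hndC₂ z fun c' => ?_
    rw [← y.sum_repr c']
    simp only [Finset.sum_mul, smul_mul_assoc, map_sum, map_smul, hz, smul_zero, Finset.sum_const_zero]
  have L1 : ∀ z : C, ∑ j, ψC (y j * z) • yd j = z := by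
    intro z
    have h : ∀ k, ψC (y k * (∑ j, ψC (y j * z) • yd j - z)) = 0 := by
      intro k
      rw [mul_sub, map_sub, Finset.mul_sum]
      simp [mul_smul_comm, hdualC, Finset.sum_ite_eq]
    have := einj _ h
    rwa [sub_eq_zero] at this
  have e'inj : ∀ z : C, (∀ j, ψC (z * yd j) = 0) → z = 0 := by
    intro z hz
    refine hndC₁ z fun c' => ?_
    rw [← L1 c', Finset.mul_sum]
    simp [mul_smul_comm, hz]
  have L2one : ∑ j, ψC (yd j) • y j = (1 : C) := by
    have h : ∀ k, ψC ((∑ j, ψC (yd j) • y j - 1) * yd k) = 0 := by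
      intro k
      rw [sub_mul, map_sub, Finset.sum_mul]
      simp [smul_mul_assoc, hdualC, mul_comm]
    have := e'inj _ h
    rwa [sub_eq_zero] at this
  constructor
  · intro h z
    -- apply (a ⊗ b) ↦ g (b * z) • a to both sides
    set h' : A →ₗ[ℂ] ℂ := g ∘ₗ LinearMap.mulRight ℂ (z : A) with hh'
    set F : A ⊗[ℂ] A →ₗ[ℂ] A := TensorProduct.lift
      (LinearMap.mk₂ ℂ (fun a b => h' b • a)
        (fun a a' b => smul_add _ a a')
        (fun c a b => smul_comm _ c a)
        (fun a b b' => by simp [add_smul])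
        (fun c a b => by simp [mul_smul])) with hF
    have hFtmul : ∀ a b : A, F (a ⊗ₜ[ℂ] b) = g (b * (z : A)) • a := fun a b => rfl
    have := congrArg F h
    rw [map_sum] at this
    simp only [map_sum, hFtmul, map_smul] at this
    have key : ∀ j : Fin n, g ((y j : A) * (z : A)) = ψC (y j * z) := by
      intro j
      rw [← hgC (y j * z)]
      norm_cast
    simp only [key] at this
    rw [one_mul, hgC z] at this
    calc ∑ i, (xd i : A) * (z : A) * (x i : A)
        = ∑ i, (xd i : A) * ((∑ j, ψC (y j * z) • yd j : C) : A) * (x i : A) := by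
          rw [L1 z]
      _ = ∑ i, ∑ j, ψC (y j * z) • ((xd i : A) * (yd j : A) * (x i : A)) := by
          refine Finset.sum_congr rfl fun i _ => ?_
          push_cast
          rw [Finset.mul_sum, Finset.sum_mul]
          refine Finset.sum_congr rfl fun j _ => ?_
          rw [mul_smul_comm, smul_mul_assoc]
      _ = (lam * ψC z) • (1 : A) := by
          rw [this, smul_smul, mul_comm]
  · intro h
    calc ∑ i, ∑ j, ((xd i : A) * (yd j : A) * (x i : A)) ⊗ₜ[ℂ] (y j : A)
        = ∑ j, (∑ i, (xd i : A) * (yd j : A) * (x i : A)) ⊗ₜ[ℂ] (y j : A) := by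
          rw [Finset.sum_comm]
          exact Finset.sum_congr rfl fun j _ => (TensorProduct.sum_tmul _ _ _).symm
      _ = ∑ j, ((lam * ψC (yd j)) • (1 : A)) ⊗ₜ[ℂ] (y j : A) := by
          exact Finset.sum_congr rfl fun j _ => by rw [h (yd j)]
      _ = lam • ((1 : A) ⊗ₜ[ℂ] ((∑ j, ψC (yd j) • y j : C) : A)) := by
          push_cast
          rw [TensorProduct.tmul_sum, Finset.smul_sum]
          refine Finset.sum_congr rfl fun j _ => ?_
          rw [mul_smul, TensorProduct.smul_tmul', TensorProduct.tmul_smul,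
            TensorProduct.smul_tmul', smul_comm]
      _ = lam • ((1 : A) ⊗ₜ[ℂ] (1 : A)) := by rw [L2one]; norm_cast
end

section
/- With A, B, C, ψ_B, ψ_C, the bases (x_i), (y_j) and dual bases (x^i), (y^j), and the nonzero scalar λ as in the context, assume that ∑_i x^i z x_i = λ ψ_C(z) · 1 for all z ∈ C and ∑_j y^j w y_j = λ ψ_B(w) · 1 for all w ∈ B. Then the linear maps S : B ⊗_ℂ A → C ⊗_ℂ A, b ⊗ a ↦ ∑_j y^j ⊗ b y_j a, and T : C ⊗_ℂ A → B ⊗_ℂ A, c ⊗ a ↦ λ^{-1} ∑_i x^i ⊗ c x_i a, are mutually inverse bijections: S T = id and T S = id. -/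
/-!
STATEMENT 11.  Same setup as Statement 10 (A a unital ℂ-algebra, B and C finite-dimensional
unital subalgebras with functionals ψ_B, ψ_C having nondegenerate pairings, bases (xᵢ), (yⱼ)
with dual bases (xⁱ), (yʲ), λ ≠ 0).  Assume ∑_i xⁱ z xᵢ = λ ψ_C(z)·1 for all z ∈ C and
∑_j yʲ w yⱼ = λ ψ_B(w)·1 for all w ∈ B.  Then the linear maps
S : B ⊗ A → C ⊗ A, b ⊗ a ↦ ∑_j yʲ ⊗ b yⱼ a, and
T : C ⊗ A → B ⊗ A, c ⊗ a ↦ λ⁻¹ ∑_i xⁱ ⊗ c xᵢ a,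
are mutually inverse bijections: S T = id and T S = id.
(S and T are given as linear maps with the stated values on pure tensors.)
-/

open scoped TensorProduct

lemma dual_expand {B : Type*} [Ring B] [Algebra ℂ B] {m : ℕ}
    (x : Module.Basis (Fin m) ℂ B) (xd : Fin m → B) (ψ : B →ₗ[ℂ] ℂ)
    (hnd : ∀ v : B, (∀ b' : B, ψ (b' * v) = 0) → v = 0)
    (hdual : ∀ i j, ψ (x i * xd j) = if i = j then 1 else 0)
    (b : B) : ∑ i, ψ (x i * b) • xd i = b := by
  set v := b - ∑ i, ψ (x i * b) • xd i with hv
  have hk : ∀ k, ψ (x k * v) = 0 := by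
    intro k
    simp only [hv, mul_sub, map_sub, Finset.mul_sum, mul_smul_comm, map_sum, map_smul,
      hdual, smul_eq_mul, mul_ite, mul_one, mul_zero]
    simp
  have h0 : ∀ b' : B, ψ (b' * v) = 0 := by
    intro b'
    have := x.sum_repr b'
    rw [← this]
    simp only [Finset.sum_mul, smul_mul_assoc, map_sum, map_smul, hk, smul_eq_mul,
      mul_zero, Finset.sum_const_zero]
  have := hnd v h0
  rw [hv, sub_eq_zero] at this
  exact this.symm

set_option maxHeartbeats 1000000 in
theorem statement11 {A : Type*} [Ring A] [Algebra ℂ A]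
    (B C : Subalgebra ℂ A) {m n : ℕ}
    (x : Module.Basis (Fin m) ℂ B) (xd : Fin m → B)
    (y : Module.Basis (Fin n) ℂ C) (yd : Fin n → C)
    (ψB : B →ₗ[ℂ] ℂ) (ψC : C →ₗ[ℂ] ℂ)
    -- nondegeneracy of the pairings:
    (hndB₁ : ∀ b : B, (∀ b' : B, ψB (b * b') = 0) → b = 0)
    (hndB₂ : ∀ b : B, (∀ b' : B, ψB (b' * b) = 0) → b = 0)
    (hndC₁ : ∀ c : C, (∀ c' : C, ψC (c * c') = 0) → c = 0)
    (hndC₂ : ∀ c : C, (∀ c' : C, ψC (c' * c) = 0) → c = 0)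
    -- dual-basis relations:
    (hdualB : ∀ i j, ψB (x i * xd j) = if i = j then 1 else 0)
    (hdualC : ∀ j k, ψC (y j * yd k) = if j = k then 1 else 0)
    (lam : ℂ) (hlam : lam ≠ 0)
    -- the key identities:
    (hkeyB : ∀ z : C, ∑ i, (xd i : A) * (z : A) * (x i : A) = (lam * ψC z) • (1 : A))
    (hkeyC : ∀ w : B, ∑ j, (yd j : A) * (w : A) * (y j : A) = (lam * ψB w) • (1 : A))
    -- the maps S and T:
    (S : TensorProduct ℂ B A →ₗ[ℂ] TensorProduct ℂ C A)
    (T : TensorProduct ℂ C A →ₗ[ℂ] TensorProduct ℂ B A)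
    (hS : ∀ (b : B) (a : A),
      S (b ⊗ₜ[ℂ] a) = ∑ j, (yd j) ⊗ₜ[ℂ] ((b : A) * (y j : A) * a))
    (hT : ∀ (c : C) (a : A),
      T (c ⊗ₜ[ℂ] a) = lam⁻¹ • ∑ i, (xd i) ⊗ₜ[ℂ] ((c : A) * (x i : A) * a)) :
    (∀ u : TensorProduct ℂ C A, S (T u) = u) ∧
    (∀ u : TensorProduct ℂ B A, T (S u) = u) := by
  constructor
  · intro u
    induction u using TensorProduct.induction_on with
    | zero => rw [LinearMap.map_zero, LinearMap.map_zero]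
    | add u v hu hv => simp [map_add, hu, hv]
    | tmul c a =>
      rw [hT, map_smul, map_sum]
      simp only [hS]
      rw [Finset.sum_comm]
      have key : ∀ j, ∑ i, (xd i : A) * (y j : A) * ((c : A) * (x i : A) * a)
          = (lam * ψC (y j * c)) • a := by
        intro j
        have h := hkeyB (y j * c)
        calc ∑ i, (xd i : A) * (y j : A) * ((c : A) * (x i : A) * a)
            = (∑ i, (xd i : A) * ((y j * c : C) : A) * (x i : A)) * a := by
              rw [Finset.sum_mul]
              refine Finset.sum_congr rfl fun i _ => ?_
              push_cast
              noncomm_ring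
          _ = ((lam * ψC (y j * c)) • (1 : A)) * a := by rw [h]
          _ = (lam * ψC (y j * c)) • a := by rw [smul_mul_assoc, one_mul]
      have expand := dual_expand y yd ψC hndC₂ hdualC c
      calc lam⁻¹ • ∑ j, ∑ i, (yd j) ⊗ₜ[ℂ]
              ((xd i : A) * (y j : A) * ((c : A) * (x i : A) * a))
          = lam⁻¹ • ∑ j, (yd j) ⊗ₜ[ℂ] ((lam * ψC (y j * c)) • a) := by
            refine congrArg _ (Finset.sum_congr rfl fun j _ => ?_)
            rw [← TensorProduct.tmul_sum, key j]
        _ = ∑ j, (ψC (y j * c)) • ((yd j) ⊗ₜ[ℂ] a) := by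
            rw [Finset.smul_sum]
            refine Finset.sum_congr rfl fun j _ => ?_
            rw [TensorProduct.tmul_smul, smul_smul]
            congr 1
            field_simp
        _ = (∑ j, ψC (y j * c) • yd j) ⊗ₜ[ℂ] a := by
            rw [TensorProduct.sum_tmul]
            exact Finset.sum_congr rfl fun j _ => (TensorProduct.smul_tmul' _ _ _).symm
        _ = c ⊗ₜ[ℂ] a := by rw [expand]
  · intro u
    induction u using TensorProduct.induction_on with
    | zero => rw [LinearMap.map_zero, LinearMap.map_zero]
    | add u v hu hv => simp [map_add, hu, hv]
    | tmul b a =>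
      rw [hS, map_sum]
      simp only [hT]
      have key : ∀ i, ∑ j, (yd j : A) * (x i : A) * ((b : A) * (y j : A) * a)
          = (lam * ψB (x i * b)) • a := by
        intro i
        have h := hkeyC (x i * b)
        calc ∑ j, (yd j : A) * (x i : A) * ((b : A) * (y j : A) * a)
            = (∑ j, (yd j : A) * ((x i * b : B) : A) * (y j : A)) * a := by
              rw [Finset.sum_mul]
              refine Finset.sum_congr rfl fun j _ => ?_
              push_cast
              noncomm_ring
          _ = ((lam * ψB (x i * b)) • (1 : A)) * a := by rw [h]
          _ = (lam * ψB (x i * b)) • a := by rw [smul_mul_assoc, one_mul]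
      have expand := dual_expand x xd ψB hndB₂ hdualB b
      calc ∑ j, lam⁻¹ • ∑ i, (xd i) ⊗ₜ[ℂ]
              ((yd j : A) * (x i : A) * ((b : A) * (y j : A) * a))
          = ∑ i, lam⁻¹ • ∑ j, (xd i) ⊗ₜ[ℂ]
              ((yd j : A) * (x i : A) * ((b : A) * (y j : A) * a)) := by
            rw [← Finset.smul_sum, ← Finset.smul_sum, Finset.sum_comm]
        _ = ∑ i, (ψB (x i * b)) • ((xd i) ⊗ₜ[ℂ] a) := by
            refine Finset.sum_congr rfl fun i _ => ?_
            rw [← TensorProduct.tmul_sum, key i, TensorProduct.tmul_smul, smul_smul]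
            congr 1
            field_simp
        _ = (∑ i, ψB (x i * b) • xd i) ⊗ₜ[ℂ] a := by
            rw [TensorProduct.sum_tmul]
            exact Finset.sum_congr rfl fun i _ => (TensorProduct.smul_tmul' _ _ _).symm
        _ = b ⊗ₜ[ℂ] a := by rw [expand]
end

section
/- With A, B, C, ψ_B, ψ_C, the bases (x_i), (y_j) and dual bases (x^i), (y^j), and the nonzero scalar λ as in the context, assume in addition that ψ_B(1) = 1 and ψ_C(1) = 1, and that ∑_i x^i z x_i = λ ψ_C(z) · 1 for all z ∈ C and ∑_j y^j w y_j = λ ψ_B(w) · 1 for all w ∈ B. Then the relative commutants are trivial: {y ∈ C : y b = b y for all b ∈ B} = ℂ · 1 and {x ∈ B : x c = c x for all c ∈ C} = ℂ · 1. -/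
/-!
STATEMENT 12.  Same setup as Statement 10 (A a unital ℂ-algebra, B and C finite-dimensional
unital subalgebras with functionals ψ_B, ψ_C having nondegenerate pairings, bases (xᵢ), (yⱼ)
with dual bases (xⁱ), (yʲ), λ ≠ 0), with in addition ψ_B(1) = 1, ψ_C(1) = 1 and the key
identities ∑_i xⁱ z xᵢ = λ ψ_C(z)·1 for all z ∈ C and ∑_j yʲ w yⱼ = λ ψ_B(w)·1 for all w ∈ B.
Then the relative commutants are trivial:
{y ∈ C : y b = b y for all b ∈ B} = ℂ·1 and {x ∈ B : x c = c x for all c ∈ C} = ℂ·1.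
-/

open scoped TensorProduct

theorem statement12 {A : Type*} [Ring A] [Algebra ℂ A]
    (B C : Subalgebra ℂ A) {m n : ℕ}
    (x : Module.Basis (Fin m) ℂ B) (xd : Fin m → B)
    (y : Module.Basis (Fin n) ℂ C) (yd : Fin n → C)
    (ψB : B →ₗ[ℂ] ℂ) (ψC : C →ₗ[ℂ] ℂ)
    -- nondegeneracy of the pairings:
    (hndB₁ : ∀ b : B, (∀ b' : B, ψB (b * b') = 0) → b = 0)
    (hndB₂ : ∀ b : B, (∀ b' : B, ψB (b' * b) = 0) → b = 0)
    (hndC₁ : ∀ c : C, (∀ c' : C, ψC (c * c') = 0) → c = 0)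
    (hndC₂ : ∀ c : C, (∀ c' : C, ψC (c' * c) = 0) → c = 0)
    -- dual-basis relations:
    (hdualB : ∀ i j, ψB (x i * xd j) = if i = j then 1 else 0)
    (hdualC : ∀ j k, ψC (y j * yd k) = if j = k then 1 else 0)
    (lam : ℂ) (hlam : lam ≠ 0)
    -- ψ_B and ψ_C are unital:
    (hψB1 : ψB 1 = 1) (hψC1 : ψC 1 = 1)
    -- the key identities:
    (hkeyB : ∀ z : C, ∑ i, (xd i : A) * (z : A) * (x i : A) = (lam * ψC z) • (1 : A))
    (hkeyC : ∀ w : B, ∑ j, (yd j : A) * (w : A) * (y j : A) = (lam * ψB w) • (1 : A)) :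
    -- the relative commutants are trivial:
    (∀ z : C, (∀ w : B, (z : A) * (w : A) = (w : A) * (z : A)) ↔
      ∃ c : ℂ, (z : A) = c • (1 : A)) ∧
    (∀ w : B, (∀ z : C, (w : A) * (z : A) = (z : A) * (w : A)) ↔
      ∃ c : ℂ, (w : A) = c • (1 : A)) := by
  constructor
  · intro z
    constructor
    · intro hcomm
      refine ⟨ψC z, ?_⟩
      have h1 := hkeyB 1
      rw [hψC1, mul_one] at h1
      have h2 := hkeyB z
      have h3 : ∑ i, (xd i : A) * (z : A) * (x i : A)
          = (∑ i, (xd i : A) * (x i : A)) * (z : A) := by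
        rw [Finset.sum_mul]
        refine Finset.sum_congr rfl fun i _ => ?_
        rw [mul_assoc, hcomm (x i), ← mul_assoc]
      have h1' : ∑ i, (xd i : A) * (x i : A) = lam • (1 : A) := by
        simpa using h1
      rw [h3, h1', smul_mul_assoc, one_mul] at h2
      have : lam • (z : A) = lam • ((ψC z) • (1 : A)) := by
        rw [smul_smul]; exact h2
      exact smul_right_injective A hlam this
    · rintro ⟨c, hc⟩ w
      rw [hc, smul_mul_assoc, one_mul, mul_smul_comm, mul_one]
  · intro w
    constructor
    · intro hcomm
      refine ⟨ψB w, ?_⟩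
      have h1 := hkeyC 1
      rw [hψB1, mul_one] at h1
      have h2 := hkeyC w
      have h3 : ∑ j, (yd j : A) * (w : A) * (y j : A)
          = (∑ j, (yd j : A) * (y j : A)) * (w : A) := by
        rw [Finset.sum_mul]
        refine Finset.sum_congr rfl fun j _ => ?_
        rw [mul_assoc, hcomm (y j), ← mul_assoc]
      have h1' : ∑ j, (yd j : A) * (y j : A) = lam • (1 : A) := by
        simpa using h1
      rw [h3, h1', smul_mul_assoc, one_mul] at h2
      have : lam • (w : A) = lam • ((ψB w) • (1 : A)) := by
        rw [smul_smul]; exact h2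
      exact smul_right_injective A hlam this
    · rintro ⟨c, hc⟩ z
      rw [hc, smul_mul_assoc, one_mul, mul_smul_comm, mul_one]
end

section
/- Let G be a finite group acting by ℂ-algebra automorphisms on a unital associative ℂ-algebra B, and let A ⊆ B be a G-invariant unital subalgebra containing the unit of B. If the Galois map Γ_A : A ⊗_{A^G} A → F(G, A), a ⊗ a' ↦ (g ↦ g(a) a'), is surjective, then the Galois map Γ_B : B ⊗_{B^G} B → F(G, B), b ⊗ b' ↦ (g ↦ g(b) b'), is also surjective. -/
/-!
STATEMENT 14.  Let a finite group G act by ℂ-algebra automorphisms (ρ : G →* (B ≃ₐ[ℂ] B)) on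
a unital ℂ-algebra B, and let A ⊆ B be a G-invariant unital subalgebra.  If the Galois map
Γ_A : A ⊗_{A^G} A → F(G, A), a ⊗ a' ↦ (g ↦ g(a) a'), is surjective, then so is
Γ_B : B ⊗_{B^G} B → F(G, B), b ⊗ b' ↦ (g ↦ g(b) b').

Since the balanced tensor products A ⊗_{A^G} A, B ⊗_{B^G} B are quotients of the tensor
products over ℂ, surjectivity of the Galois maps is equivalent to surjectivity of their lifts
Γ_A : A ⊗_ℂ A → F(G, A) and Γ_B : B ⊗_ℂ B → F(G, B) (the ranges coincide); this is how
surjectivity is expressed here.  ΓA and ΓB are given as linear maps with the stated values on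
pure tensors; G-invariance of A guarantees that (g ↦ ρ g a * a') takes values in A.
-/

open scoped TensorProduct

theorem statement14 {G B : Type*} [Group G] [Fintype G] [Ring B] [Algebra ℂ B]
    (ρ : G →* (B ≃ₐ[ℂ] B))
    (A : Subalgebra ℂ B) (hA : ∀ (g : G), ∀ a ∈ A, ρ g a ∈ A)
    (ΓA : TensorProduct ℂ A A →ₗ[ℂ] (G → A))
    (hΓA : ∀ (a a' : A) (g : G), (ΓA (a ⊗ₜ[ℂ] a') g : B) = ρ g (a : B) * (a' : B))
    (ΓB : TensorProduct ℂ B B →ₗ[ℂ] (G → B))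
    (hΓB : ∀ (b b' : B) (g : G), ΓB (b ⊗ₜ[ℂ] b') g = ρ g b * b')
    (hsurjA : Function.Surjective ΓA) :
    Function.Surjective ΓB := by
  classical
  intro f
  -- For each h : G, pick u_h ∈ A ⊗ A mapping to the indicator function at h.
  choose u hu using fun h : G => hsurjA (fun g => if g = h then (1 : A) else 0)
  -- Linear map A ⊗ A → B ⊗ B : a ⊗ a' ↦ a ⊗ (a' * f h)
  let φ : G → (TensorProduct ℂ A A →ₗ[ℂ] TensorProduct ℂ B B) := fun h =>
    TensorProduct.map A.val.toLinearMap
      ((LinearMap.mulRight ℂ (f h)).comp A.val.toLinearMap)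
  have key : ∀ (h : G) (u : TensorProduct ℂ A A) (g : G),
      ΓB (φ h u) g = (ΓA u g : B) * f h := by
    intro h u g
    induction u using TensorProduct.induction_on with
    | zero =>
        rw [(φ h).map_zero, ΓB.map_zero, ΓA.map_zero]
        simp
    | tmul a a' =>
        simp only [φ, TensorProduct.map_tmul, LinearMap.comp_apply,
          AlgHom.toLinearMap_apply, Subalgebra.coe_val, LinearMap.mulRight_apply]
        rw [hΓB, hΓA, mul_assoc]
    | add x y hx hy =>
        simp only [map_add, Pi.add_apply, Subalgebra.coe_add, add_mul] at *
        rw [hx, hy]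
  refine ⟨∑ h : G, φ h (u h), ?_⟩
  funext g
  have : ΓB (∑ h : G, φ h (u h)) g = ∑ h : G, (ΓA (u h) g : B) * f h := by
    rw [map_sum]
    simp only [Finset.sum_apply]
    exact Finset.sum_congr rfl fun h _ => key h (u h) g
  rw [this]
  have : ∀ h : G, (ΓA (u h) g : B) * f h = (if g = h then (1:B) else 0) * f h := by
    intro h
    rw [hu h]
    by_cases hgh : g = h <;> simp [hgh]
  rw [Finset.sum_congr rfl fun h _ => this h]
  simp
end
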